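/- Let σ : ℝ → ℝ be real analytic and Lipschitz continuous with Lipschitz constant L, let x₀ ∈ ℝ with σ(x₀) = 0, and let F : ℝ × ℝ → ℝ satisfy ∂F/∂y(x, y) = σ(F(x, y)) and F(x, 0) = x for all x, y ∈ ℝ. Define h₁ = σ, h_{k+1} = σ·h_k′, and set Φ₀ = 1 and Φ_k = h_k′(x₀) for k ≥ 1. Then for every y ∈ ℝ the series Σ_{k≥0} Φ_k·y^k/k! converges, the map x ↦ F(x, y) is differentiable at x₀, and its derivative there equals Σ_{k≥0} Φ_k·y^k/k!, i.e., lim_{x → x₀} (F(x, y) − x₀)/(x − x₀) = Σ_{k≥0} Φ_k·y^k/k!. -/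

import Mathlib

open Real Set

private lemma gron_fwd {f f' : ℝ → ℝ} {δ K ε b : ℝ}
    (hf : ∀ t, HasDerivAt f (f' t) t)
    (hδ : |f 0| ≤ δ)
    (bound : ∀ t ∈ Set.Icc (0:ℝ) b, |f' t| ≤ K * |f t| + ε) :
    ∀ t ∈ Set.Icc (0:ℝ) b, |f t| ≤ gronwallBound δ K ε t := by
  have H := norm_le_gronwallBound_of_norm_deriv_right_le (f := f) (f' := f') (a := 0) (b := b)
    (δ := δ) (K := K) (ε := ε)
    (fun t _ => (hf t).continuousAt.continuousWithinAt)
    (fun t _ => (hf t).hasDerivWithinAt)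
    (by simpa using hδ)
    (fun t ht => by simpa using bound t (Set.mem_Icc_of_Ico ht))
  intro t ht
  simpa using H t ht

private lemma gron_two {f f' : ℝ → ℝ} {δ K ε b : ℝ}
    (hf : ∀ t, HasDerivAt f (f' t) t)
    (hδ : |f 0| ≤ δ)
    (bound : ∀ t : ℝ, |t| ≤ b → |f' t| ≤ K * |f t| + ε) :
    ∀ t : ℝ, |t| ≤ b → |f t| ≤ gronwallBound δ K ε |t| := by
  intro t ht
  rcases le_or_gt 0 t with h0 | h0
  · have := gron_fwd hf hδ
      (fun s hs => bound s (by rw [abs_of_nonneg hs.1]; exact hs.2)) t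
      ⟨h0, le_trans (le_abs_self t) ht⟩
    rwa [abs_of_nonneg h0]
  · have hg : ∀ s, HasDerivAt (fun s => f (-s)) (f' (-s) * (-1)) s := by
      intro s
      exact (hf (-s)).comp s (hasDerivAt_neg s)
    have := gron_fwd (f := fun s => f (-s)) (f' := fun s => f' (-s) * (-1)) hg
      (by simpa using hδ)
      (fun s hs => by
        have : |(-s)| ≤ b := by rw [abs_neg, abs_of_nonneg hs.1]; exact hs.2
        simpa [abs_mul] using bound (-s) this)
      (-t) ⟨by linarith, le_trans (neg_le_abs t) ht⟩
    simp only [neg_neg] at this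
    rwa [abs_of_neg h0]

private lemma gronwallBound_crude {K ε t : ℝ} (hε : 0 ≤ ε) (ht : 0 ≤ t) (hK : 0 ≤ K) :
    gronwallBound 0 K ε t ≤ ε * t * Real.exp (K * t) := by
  rcases eq_or_ne K 0 with hK0 | hK0
  · rw [hK0, gronwallBound_K0]
    simp
  · rw [gronwallBound_of_K_ne_0 hK0]
    simp only [zero_mul, zero_add]
    have hs : 0 ≤ K * t := mul_nonneg hK ht
    have h1 : Real.exp (K * t) - 1 ≤ (K * t) * Real.exp (K * t) := by
      have h2 := Real.add_one_le_exp (-(K * t))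
      have h3 : (-(K * t) + 1) * Real.exp (K * t) ≤ Real.exp (-(K * t)) * Real.exp (K * t) :=
        mul_le_mul_of_nonneg_right h2 (Real.exp_pos _).le
      rw [← Real.exp_add, neg_add_cancel, Real.exp_zero] at h3
      nlinarith
    calc ε / K * (Real.exp (K * t) - 1) ≤ ε / K * ((K * t) * Real.exp (K * t)) := by
          apply mul_le_mul_of_nonneg_left h1 (div_nonneg hε hK)
      _ = ε * t * Real.exp (K * t) := by field_simp

theorem fokker_planck_flow_deriv_at_zero
    (σ : ℝ → ℝ) (hσa : AnalyticOnNhd ℝ σ Set.univ)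
    (L : NNReal) (hσ : LipschitzWith L σ)
    (x₀ : ℝ) (hz : σ x₀ = 0)
    (F : ℝ → ℝ → ℝ)
    (hF : ∀ x y : ℝ, HasDerivAt (fun y => F x y) (σ (F x y)) y)
    (hF0 : ∀ x : ℝ, F x 0 = x)
    (h : ℕ → ℝ → ℝ)
    (hh1 : h 1 = σ)
    (hhk : ∀ k : ℕ, 1 ≤ k → h (k + 1) = fun x => σ x * deriv (h k) x)
    (Φ : ℕ → ℝ)
    (hΦ0 : Φ 0 = 1)
    (hΦk : ∀ k : ℕ, 1 ≤ k → Φ k = deriv (h k) x₀) :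
    ∀ y : ℝ,
      Summable (fun k : ℕ => Φ k * y ^ k / (Nat.factorial k : ℝ)) ∧
      HasDerivAt (fun x => F x y)
        (∑' k : ℕ, Φ k * y ^ k / (Nat.factorial k : ℝ)) x₀ := by
  set c : ℝ := deriv σ x₀ with hcdef
  have hσd : ∀ x : ℝ, DifferentiableAt ℝ σ x := fun x => (hσa x trivial).differentiableAt
  have hc : HasDerivAt σ c x₀ := (hσd x₀).hasDerivAt
  -- Φ k = c ^ k
  have hPk : ∀ k : ℕ, 1 ≤ k → AnalyticOnNhd ℝ (h k) Set.univ ∧ deriv (h k) x₀ = c ^ k := by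
    intro k hk
    induction k with
    | zero => omega
    | succ n ih =>
      rcases Nat.eq_or_lt_of_le hk with h1 | h1
      · constructor
        · rw [show n + 1 = 1 by omega, hh1]; exact hσa
        · rw [show n + 1 = 1 by omega, hh1, pow_one]
      · have hn : 1 ≤ n := by omega
        obtain ⟨ha, hd⟩ := ih hn
        have hda : AnalyticOnNhd ℝ (deriv (h n)) Set.univ := ha.deriv
        constructor
        · rw [hhk n hn]; exact hσa.mul hda
        · rw [hhk n hn]
          have hdd : HasDerivAt (deriv (h n)) (deriv (deriv (h n)) x₀) x₀ :=
            ((hda x₀ trivial).differentiableAt).hasDerivAt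
          have := (hc.mul hdd).deriv
          change deriv (σ * deriv (h n)) x₀ = _
          rw [this, hd, hz, hcdef]
          ring
  have hΦ : ∀ k : ℕ, Φ k = c ^ k := by
    intro k
    rcases Nat.eq_zero_or_pos k with h0 | h0
    · rw [h0, hΦ0, pow_zero]
    · rw [hΦk k h0, (hPk k h0).2]
  intro y
  have hser : (fun k : ℕ => Φ k * y ^ k / (Nat.factorial k : ℝ))
      = fun k : ℕ => (c * y) ^ k / (Nat.factorial k : ℝ) := by
    funext k; rw [hΦ k, mul_pow]
  have hsum : Summable (fun k : ℕ => Φ k * y ^ k / (Nat.factorial k : ℝ)) := by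
    rw [hser]; exact Real.summable_pow_div_factorial (c * y)
  have htsum : (∑' k : ℕ, Φ k * y ^ k / (Nat.factorial k : ℝ)) = Real.exp (c * y) := by
    rw [hser, Real.exp_eq_exp_ℝ, NormedSpace.exp_eq_tsum_div]
  refine ⟨hsum, ?_⟩
  rw [htsum]
  -- Step A: |F x t - x₀| ≤ |x - x₀| * exp (L * |t|)
  have lipbd : ∀ x : ℝ, ∀ t : ℝ, |σ (F x t)| ≤ (L : ℝ) * |F x t - x₀| + 0 := by
    intro x t
    have := hσ.dist_le_mul (F x t) x₀
    rw [Real.dist_eq, Real.dist_eq, hz, sub_zero] at this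
    linarith
  have stepA : ∀ x : ℝ, ∀ t : ℝ, |F x t - x₀| ≤ |x - x₀| * Real.exp ((L : ℝ) * |t|) := by
    intro x t
    have hfd : ∀ s, HasDerivAt (fun s => F x s - x₀) (σ (F x s)) s :=
      fun s => (hF x s).sub_const x₀
    have := gron_two (b := |t|) hfd (by rw [hF0]) (fun s _ => lipbd x s) t le_rfl
    rwa [gronwallBound_ε0] at this
  have hFx₀ : ∀ t : ℝ, F x₀ t = x₀ := by
    intro t
    have := stepA x₀ t
    simp only [sub_self, abs_zero, zero_mul] at this
    have := abs_nonneg (F x₀ t - x₀)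
    have heq : |F x₀ t - x₀| = 0 := le_antisymm (stepA x₀ t |>.trans (by simp)) this
    rw [abs_eq_zero, sub_eq_zero] at heq
    exact heq
  -- Step B: the derivative
  rw [hasDerivAt_iff_isLittleO]
  rw [Asymptotics.isLittleO_iff]
  intro ε hε
  set A : ℝ := Real.exp ((L : ℝ) * |y|) with hA
  have hA1 : 1 ≤ A := Real.one_le_exp (by positivity)
  have hA0 : 0 < A := lt_of_lt_of_le one_pos hA1
  set C : ℝ := A * (|y| * Real.exp (|c| * |y|)) + 1 with hC
  have hC0 : 0 < C := by positivity
  set ε₁ : ℝ := ε / C with hε₁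
  have hε₁0 : 0 < ε₁ := div_pos hε hC0
  -- from differentiability of σ at x₀
  have hlo : ∀ᶠ u in nhds x₀, |σ u - c * (u - x₀)| ≤ ε₁ * |u - x₀| := by
    have := (hasDerivAt_iff_isLittleO.mp hc)
    rw [Asymptotics.isLittleO_iff] at this
    have h2 := this hε₁0
    filter_upwards [h2] with u hu
    simpa [hz, Real.norm_eq_abs, mul_comm, abs_sub_comm] using hu
  rw [Metric.eventually_nhds_iff] at hlo
  obtain ⟨δ, hδ0, hδ⟩ := hlo
  rw [Metric.eventually_nhds_iff]
  refine ⟨δ / A, by positivity, ?_⟩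
  intro x hx
  rw [Real.dist_eq] at hx
  -- bound on |F x t - x₀| for |t| ≤ |y|
  have hxb : ∀ t : ℝ, |t| ≤ |y| → |F x t - x₀| < δ := by
    intro t ht
    calc |F x t - x₀| ≤ |x - x₀| * Real.exp ((L : ℝ) * |t|) := stepA x t
      _ ≤ |x - x₀| * A := by
          apply mul_le_mul_of_nonneg_left _ (abs_nonneg _)
          exact Real.exp_le_exp.mpr (mul_le_mul_of_nonneg_left ht L.coe_nonneg)
      _ < (δ / A) * A := by
          apply mul_lt_mul_of_pos_right hx hA0
      _ = δ := by field_simp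
  -- Gronwall on g t = F x t - x₀ - exp(c t) * (x - x₀)
  set g : ℝ → ℝ := fun t => F x t - x₀ - Real.exp (c * t) * (x - x₀) with hgdef
  have hg0 : g 0 = 0 := by simp [hgdef, hF0]
  have hgd : ∀ t, HasDerivAt g (σ (F x t) - c * Real.exp (c * t) * (x - x₀)) t := by
    intro t
    have he : HasDerivAt (fun t => Real.exp (c * t) * (x - x₀))
        (c * Real.exp (c * t) * (x - x₀)) t := by
      have h0 : HasDerivAt (fun s : ℝ => Real.exp (c * s)) (Real.exp (c * t) * (c * 1)) t :=
        ((hasDerivAt_id t).const_mul c).exp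
      exact (h0.mul_const (x - x₀)).congr_deriv (by ring)
    exact ((hF x t).sub_const x₀).sub he
  have hgbound : ∀ t : ℝ, |t| ≤ |y| →
      |σ (F x t) - c * Real.exp (c * t) * (x - x₀)| ≤ |c| * |g t| + ε₁ * (|x - x₀| * A) := by
    intro t ht
    have key : σ (F x t) - c * Real.exp (c * t) * (x - x₀)
        = c * g t + (σ (F x t) - c * (F x t - x₀)) := by
      simp only [hgdef]; ring
    rw [key]
    have h1 : |σ (F x t) - c * (F x t - x₀)| ≤ ε₁ * |F x t - x₀| := by
      apply hδ
      rw [Real.dist_eq]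
      exact hxb t ht
    have h2 : |F x t - x₀| ≤ |x - x₀| * A := by
      calc |F x t - x₀| ≤ |x - x₀| * Real.exp ((L : ℝ) * |t|) := stepA x t
        _ ≤ |x - x₀| * A := by
            apply mul_le_mul_of_nonneg_left _ (abs_nonneg _)
            exact Real.exp_le_exp.mpr (mul_le_mul_of_nonneg_left ht L.coe_nonneg)
    calc |c * g t + (σ (F x t) - c * (F x t - x₀))|
        ≤ |c * g t| + |σ (F x t) - c * (F x t - x₀)| := abs_add_le _ _
      _ ≤ |c| * |g t| + ε₁ * (|x - x₀| * A) := by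
          rw [abs_mul]
          have h3 : |σ (F x t) - c * (F x t - x₀)| ≤ ε₁ * (|x - x₀| * A) :=
            h1.trans (mul_le_mul_of_nonneg_left h2 hε₁0.le)
          linarith
  have hgron := gron_two (δ := 0) (b := |y|) hgd (by rw [hg0]; simp) hgbound y le_rfl
  have hcrude := gronwallBound_crude (K := |c|) (ε := ε₁ * (|x - x₀| * A)) (t := |y|)
    (by positivity) (abs_nonneg y) (abs_nonneg c)
  have hfinal : |g y| ≤ ε * |x - x₀| := by
    calc |g y| ≤ gronwallBound 0 |c| (ε₁ * (|x - x₀| * A)) |y| := hgron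
      _ ≤ ε₁ * (|x - x₀| * A) * |y| * Real.exp (|c| * |y|) := hcrude
      _ = ε₁ * (A * (|y| * Real.exp (|c| * |y|))) * |x - x₀| := by ring
      _ ≤ ε₁ * C * |x - x₀| := by
          apply mul_le_mul_of_nonneg_right _ (abs_nonneg _)
          apply mul_le_mul_of_nonneg_left _ hε₁0.le
          rw [hC]; linarith
      _ = ε * |x - x₀| := by rw [hε₁]; field_simp
  simp only [Real.norm_eq_abs, smul_eq_mul]
  calc |F x y - F x₀ y - (x - x₀) * Real.exp (c * y)|
      = |g y| := by rw [hFx₀ y, hgdef]; ring_nf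
    _ ≤ ε * |x - x₀| := hfinal
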